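/- For all x ∈ [0, π], 2·sin(x/2 + π/6) ≥ x/5 + 1. -/

import Mathlib

open Real

theorem stmt13 (x : ℝ) (hx : x ∈ Set.Icc 0 π) :
    2 * sin (x/2 + π/6) ≥ x/5 + 1 := by
  obtain ⟨hx0, hxp⟩ := hx
  have hpi : (3.14 : ℝ) < π := by linarith [pi_gt_d2]
  have hpi2 : π < 3.15 := by linarith [pi_lt_d2]
  have hconc := strictConcaveOn_sin_Icc.concaveOn
  have hμ0 : 0 ≤ x/π := div_nonneg hx0 (by linarith)
  have hμ1 : x/π ≤ 1 := by
    rw [div_le_one (by linarith)]; exact hxp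
  have hkey := hconc.2 (Set.mem_Icc.2 ⟨by positivity, by linarith⟩ : (π/6) ∈ Set.Icc 0 π)
    (Set.mem_Icc.2 ⟨by positivity, by linarith⟩ : (2*π/3) ∈ Set.Icc 0 π)
    (show (0:ℝ) ≤ 1 - x/π by linarith) hμ0 (by ring)
  have ht : (1 - x/π) • (π/6) + (x/π) • (2*π/3) = x/2 + π/6 := by
    rw [smul_eq_mul, smul_eq_mul]
    field_simp
    ring
  rw [ht] at hkey
  simp only [smul_eq_mul] at hkey
  rw [Real.sin_pi_div_six] at hkey
  have h23 : sin (2*π/3) = √3/2 := by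
    have : (2*π/3 : ℝ) = π - π/3 := by ring
    rw [this, Real.sin_pi_sub, Real.sin_pi_div_three]
  rw [h23] at hkey
  have hs3 : (1.73 : ℝ) ≤ √3 := by
    nlinarith [Real.sq_sqrt (by norm_num : (3:ℝ) ≥ 0), Real.sqrt_nonneg 3]
  -- need: 2 sin t ≥ (1 - x/π) + (x/π)·√3 ≥ 1 + x/5
  have hfrac : x/5 ≤ (x/π) * (√3 - 1) := by
    rw [div_mul_eq_mul_div, div_le_div_iff₀ (by norm_num) (by linarith)]
    nlinarith
  have hπ0 : (0:ℝ) < π := by linarith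
  nlinarith [hkey, hfrac]
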